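/- If all dimensions satisfy 2 ≤ n_i ≤ 3 for a k-dimensional board with k ≥ 3, then the square (2,2,...,2) has no neighbor in the knight graph; hence the knight graph has an isolated vertex and no Hamiltonian cycle. -/

import Mathlib

/-- A knight move in `k` dimensions: coordinates differ in exactly two places,
one by `±1` and one by `±2`. -/
def knightMove {k : ℕ} (a b : Fin k → ℤ) : Prop :=
  ∃ i j : Fin k, i ≠ j ∧ |a i - b i| = 1 ∧ |a j - b j| = 2 ∧
    ∀ l, l ≠ i → l ≠ j → a l = b l

/-- Membership in the board `∏ [1, n i]`. -/
def onBoard {k : ℕ} (n : Fin k → ℕ) (a : Fin k → ℤ) : Prop :=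
  ∀ i, 1 ≤ a i ∧ a i ≤ (n i : ℤ)

/-- The knight graph on the board `∏ [1, n i]`. -/
def knightGraph {k : ℕ} (n : Fin k → ℕ) :
    SimpleGraph {a : Fin k → ℤ // onBoard n a} where
  Adj x y := knightMove x.1 y.1
  symm := by
    constructor
    rintro x y ⟨i, j, hij, h1, h2, h3⟩
    exact ⟨i, j, hij, by rwa [abs_sub_comm], by rwa [abs_sub_comm],
      fun l hli hlj => (h3 l hli hlj).symm⟩
  loopless := by
    constructor
    rintro x ⟨i, j, hij, h1, h2, h3⟩
    simp at h1

/-- Existence of a closed knight's tour (Hamiltonian cycle of the knight graph). -/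
def HasClosedTour {k : ℕ} (n : Fin k → ℕ) : Prop :=
  ∃ (x : {a : Fin k → ℤ // onBoard n a}) (w : (knightGraph n).Walk x x),
    w.IsHamiltonianCycle

lemma adj_of_mem_support {V : Type*} {G : SimpleGraph V} {a b v : V}
    (p : G.Walk a b) (hv : v ∈ p.support) : v = b ∨ ∃ u, G.Adj v u := by
  induction p with
  | nil => simp at hv; exact Or.inl hv
  | cons h q ih =>
    rw [SimpleGraph.Walk.support_cons] at hv
    rcases List.mem_cons.mp hv with rfl | hv'
    · exact Or.inr ⟨_, h⟩
    · exact ih hv'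

/-- If all dimensions satisfy `2 ≤ n i ≤ 3` (with `k ≥ 3`), the square `(2,…,2)`
has no neighbour in the knight graph; hence there is an isolated vertex and no
Hamiltonian cycle. -/
theorem isolated_vertex_of_dims_le_three {k : ℕ} (hk : 3 ≤ k) (n : Fin k → ℕ)
    (hn : ∀ i, 2 ≤ n i ∧ n i ≤ 3) (h2 : onBoard n (fun _ => 2)) :
    (∀ y, ¬ (knightGraph n).Adj ⟨fun _ => 2, h2⟩ y) ∧ ¬ HasClosedTour n := by
  have hiso : ∀ y, ¬ (knightGraph n).Adj ⟨fun _ => 2, h2⟩ y := by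
    rintro y ⟨i, j, hij, h1, hdj, h3⟩
    have hb := y.2 j
    have hnj := (hn j).2
    have : (n j : ℤ) ≤ 3 := by exact_mod_cast hnj
    have hx : (⟨fun _ => 2, h2⟩ : {a : Fin k → ℤ // onBoard n a}).1 j = 2 := rfl
    rw [hx] at hdj
    rcases abs_eq (by norm_num : (0:ℤ) ≤ 2) |>.mp hdj with h | h <;> omega
  refine ⟨hiso, ?_⟩
  rintro ⟨x, w, hw⟩
  have hv : (⟨fun _ => 2, h2⟩ : {a : Fin k → ℤ // onBoard n a}) ∈ w.support :=
    hw.mem_support _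
  rcases adj_of_mem_support w hv with heq | ⟨u, hu⟩
  · subst heq
    cases w with
    | nil => exact hw.1.not_nil (SimpleGraph.Walk.nil_iff_length_eq.mpr rfl)
    | cons h q => exact hiso _ h
  · exact hiso _ hu
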